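/- Let μ be a Borel probability measure on ℝ and I an open interval with μ(I) = 0 on which G_μ has no zero. Then for x ∈ I, g(x) = ∫ (s²+1)/(s-x)² dρ(s) = -G_μ'(x)/G_μ(x)² - 1, where ρ is the measure in the Nevanlinna representation of F_μ = 1/G_μ. -/

import Mathlib

open MeasureTheory Set Complex Filter

theorem lem1 (x y s : ℝ) (hy : 0 < y) :
    ((1 + (s:ℂ) * (x + y*Complex.I)) / ((s:ℂ) - (x + y*Complex.I))).im
      = y * ((1 + s^2) / ((s-x)^2 + y^2)) := by
  have hD : (0:ℝ) < (s-x)^2 + y^2 := by positivity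
  have hnsq : Complex.normSq ((s:ℂ) - (x + y*Complex.I)) = (s-x)^2 + y^2 := by
    simp [Complex.normSq_apply]; ring
  rw [Complex.div_im, hnsq]
  simp only [Complex.add_im, Complex.add_re, Complex.sub_re, Complex.sub_im,
    Complex.one_im, Complex.one_re, Complex.mul_im, Complex.mul_re,
    Complex.ofReal_re, Complex.ofReal_im, Complex.I_re, Complex.I_im]
  field_simp
  ring


theorem lem_ne {z : ℂ} (hz : 0 < z.im) (s : ℝ) : (s:ℂ) - z ≠ 0 := by
  intro h
  have := congrArg Complex.im h
  simp at this
  linarith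

theorem lem_cont {z : ℂ} (hz : 0 < z.im) :
    Continuous (fun s : ℝ => (1 + (s:ℂ)*z)/((s:ℂ) - z)) := by
  apply Continuous.div
  · fun_prop
  · fun_prop
  · exact fun s => lem_ne hz s

theorem lem_bound {z : ℂ} (hz : 0 < z.im) (s : ℝ) :
    ‖(1 + (s:ℂ)*z)/((s:ℂ) - z)‖ ≤ (1 + (2*‖z‖+1)*‖z‖)/z.im + (2 + 2*‖z‖) := by
  have hz0 : (0:ℝ) < ‖z‖ + 1 := by positivity
  have hnum : ‖(1 + (s:ℂ)*z)‖ ≤ 1 + |s| * ‖z‖ := by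
    calc ‖(1 + (s:ℂ)*z)‖ ≤ ‖(1:ℂ)‖ + ‖(s:ℂ)*z‖ := norm_add_le _ _
    _ = 1 + |s| * ‖z‖ := by simp
  rcases le_or_gt |s| (2*‖z‖+1) with h | h
  · have hden : z.im ≤ ‖(s:ℂ) - z‖ := by
      calc z.im ≤ |((s:ℂ) - z).im| := by
            simp only [Complex.sub_im, Complex.ofReal_im, zero_sub, abs_neg]
            exact le_abs_self _
      _ ≤ ‖(s:ℂ) - z‖ := Complex.abs_im_le_norm _
    have h1 : ‖(1 + (s:ℂ)*z)/((s:ℂ) - z)‖ ≤ (1 + (2*‖z‖+1)*‖z‖)/z.im := by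
      rw [norm_div]
      apply div_le_div₀ (by positivity) _ hz hden
      calc ‖(1 + (s:ℂ)*z)‖ ≤ 1 + |s| * ‖z‖ := hnum
      _ ≤ 1 + (2*‖z‖+1)*‖z‖ := by nlinarith [norm_nonneg z]
    linarith [h1, norm_nonneg z]
  · have hs2 : ‖z‖ ≤ |s|/2 := by nlinarith
    have hnr : ‖(s:ℂ)‖ = |s| := Complex.norm_real s
    have hden : |s|/2 ≤ ‖(s:ℂ) - z‖ := by
      have h1 := norm_sub_norm_le (s:ℂ) z
      rw [hnr] at h1
      linarith
    have hspos : 0 < |s| := by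
      have := norm_nonneg z; linarith
    have h1 : ‖(1 + (s:ℂ)*z)/((s:ℂ) - z)‖ ≤ (1 + |s| * ‖z‖) / (|s| / 2) := by
      rw [norm_div]
      exact div_le_div₀ (by positivity) hnum (by positivity) hden
    have h2 : (1 + |s| * ‖z‖) / (|s| / 2) ≤ 2 + 2*‖z‖ := by
      rw [div_le_iff₀ (by positivity)]
      nlinarith [norm_nonneg z]
    have : (0:ℝ) ≤ (1 + (2*‖z‖+1)*‖z‖)/z.im := by positivity
    linarith

theorem lem_int (ρ : Measure ℝ) [IsFiniteMeasure ρ] {z : ℂ} (hz : 0 < z.im) :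
    Integrable (fun s : ℝ => (1 + (s:ℂ)*z)/((s:ℂ) - z)) ρ := by
  apply Integrable.mono' (integrable_const ((1 + (2*‖z‖+1)*‖z‖)/z.im + (2 + 2*‖z‖)))
    (lem_cont hz).aestronglyMeasurable
  exact Filter.Eventually.of_forall (lem_bound hz)


theorem him_z (x y : ℝ) (hy : 0 < y) : ((x:ℂ) + y*Complex.I).im = y := by simp

theorem lem_gint (ρ : Measure ℝ) [IsFiniteMeasure ρ] (x y : ℝ) (hy : 0 < y) :
    Integrable (fun s : ℝ => (1+s^2)/((s-x)^2+y^2)) ρ := by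
  have hz : (0:ℝ) < ((x:ℂ) + y*Complex.I).im := by rw [him_z x y hy]; exact hy
  have h := ((lem_int ρ hz).im).const_mul y⁻¹
  apply h.congr
  apply Filter.Eventually.of_forall
  intro s
  show y⁻¹ * _ = _
  rw [RCLike.im_to_complex, lem1 x y s hy, ← mul_assoc, inv_mul_cancel₀ hy.ne', one_mul]

theorem lem_imF (ρ : Measure ℝ) [IsFiniteMeasure ρ] (x y : ℝ) (hy : 0 < y) :
    (∫ s : ℝ, (1 + (s:ℂ) * ((x:ℂ) + y*Complex.I)) / ((s:ℂ) - ((x:ℂ) + y*Complex.I)) ∂ρ).im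
      = y * ∫ s : ℝ, (1+s^2)/((s-x)^2+y^2) ∂ρ := by
  have hz : (0:ℝ) < ((x:ℂ) + y*Complex.I).im := by rw [him_z x y hy]; exact hy
  rw [show (∫ s : ℝ, (1 + (s:ℂ) * ((x:ℂ) + y*Complex.I)) / ((s:ℂ) - ((x:ℂ) + y*Complex.I)) ∂ρ).im
      = RCLike.im (∫ s : ℝ, (1 + (s:ℂ) * ((x:ℂ) + y*Complex.I)) / ((s:ℂ) - ((x:ℂ) + y*Complex.I)) ∂ρ) from
      RCLike.im_to_complex.symm,
    ← integral_im (lem_int ρ hz), ← integral_const_mul]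
  simp only [RCLike.im_to_complex]
  exact integral_congr_ae (Filter.Eventually.of_forall fun s => lem1 x y s hy)


theorem lem_ne2 {z : ℂ} (hz : 0 < z.im) (s : ℝ) : z - (s:ℂ) ≠ 0 := by
  intro h
  have := congrArg Complex.im h
  simp at this
  linarith

theorem lem_Gcont {z : ℂ} (hz : 0 < z.im) :
    Continuous (fun s : ℝ => (z - (s:ℂ))⁻¹) := by
  apply Continuous.inv₀ (by fun_prop) (fun s => lem_ne2 hz s)

theorem lem_Gbound {z : ℂ} (hz : 0 < z.im) (s : ℝ) :
    ‖(z - (s:ℂ))⁻¹‖ ≤ (z.im)⁻¹ := by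
  rw [norm_inv]
  apply inv_anti₀ hz
  calc z.im ≤ |(z - (s:ℂ)).im| := by
        simp only [Complex.sub_im, Complex.ofReal_im, sub_zero]
        exact le_abs_self _
  _ ≤ ‖z - (s:ℂ)‖ := Complex.abs_im_le_norm _

theorem lem_Gint (μ : Measure ℝ) [IsProbabilityMeasure μ] {z : ℂ} (hz : 0 < z.im) :
    Integrable (fun s : ℝ => (z - (s:ℂ))⁻¹) μ := by
  apply Integrable.mono' (integrable_const ((z.im)⁻¹)) (lem_Gcont hz).aestronglyMeasurable
  exact Filter.Eventually.of_forall (lem_Gbound hz)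

theorem lem_Bint (μ : Measure ℝ) [IsProbabilityMeasure μ] (x y : ℝ) (hy : 0 < y) :
    Integrable (fun s : ℝ => ((x-s)^2+y^2)⁻¹) μ := by
  apply Integrable.mono' (integrable_const ((y^2)⁻¹))
  · apply Continuous.aestronglyMeasurable
    apply Continuous.inv₀ (by fun_prop)
    intro s; positivity
  · apply Filter.Eventually.of_forall
    intro s
    rw [Real.norm_of_nonneg (by positivity)]
    apply inv_anti₀ (by positivity)
    nlinarith [sq_nonneg (x-s)]

theorem lem_imG (μ : Measure ℝ) [IsProbabilityMeasure μ] (x y : ℝ) (hy : 0 < y) :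
    (∫ s : ℝ, (((x:ℂ) + y*Complex.I) - (s:ℂ))⁻¹ ∂μ).im
      = -(y * ∫ s : ℝ, ((x-s)^2+y^2)⁻¹ ∂μ) := by
  have hz : (0:ℝ) < ((x:ℂ) + y*Complex.I).im := by simpa using hy
  rw [show (∫ s : ℝ, (((x:ℂ) + y*Complex.I) - (s:ℂ))⁻¹ ∂μ).im
      = RCLike.im (∫ s : ℝ, (((x:ℂ) + y*Complex.I) - (s:ℂ))⁻¹ ∂μ) from RCLike.im_to_complex.symm,
    ← integral_im (lem_Gint μ hz)]
  have hpt : ∀ s : ℝ, RCLike.im ((((x:ℂ) + y*Complex.I) - (s:ℂ))⁻¹)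
      = -(y * ((x-s)^2+y^2)⁻¹) := by
    intro s
    rw [RCLike.im_to_complex, Complex.inv_im]
    have hnsq : Complex.normSq (((x:ℂ) + y*Complex.I) - (s:ℂ)) = (x-s)^2 + y^2 := by
      simp [Complex.normSq_apply]; ring
    rw [hnsq]
    simp only [Complex.sub_im, Complex.add_im, Complex.ofReal_im, Complex.mul_im,
      Complex.I_im, Complex.I_re, Complex.ofReal_re]
    field_simp
    ring
  calc ∫ s : ℝ, RCLike.im ((((x:ℂ) + y*Complex.I) - (s:ℂ))⁻¹) ∂μ
      = ∫ s : ℝ, -(y * ((x-s)^2+y^2)⁻¹) ∂μ :=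
        integral_congr_ae (Filter.Eventually.of_forall hpt)
    _ = -(y * ∫ s : ℝ, ((x-s)^2+y^2)⁻¹ ∂μ) := by rw [integral_neg, integral_const_mul]


theorem lem_A_eq (μ : Measure ℝ) [IsProbabilityMeasure μ]
    (ρ : Measure ℝ) [IsFiniteMeasure ρ] (a : ℝ)
    (hNev : ∀ z : ℂ, 0 < z.im →
      (∫ s : ℝ, (z - (s : ℂ))⁻¹ ∂μ)⁻¹
        = (a : ℂ) + z + ∫ s : ℝ, (1 + (s : ℂ) * z) / ((s : ℂ) - z) ∂ρ)
    (x y : ℝ) (hy : 0 < y) :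
    (∫ s : ℝ, (1+s^2)/((s-x)^2+y^2) ∂ρ)
      = (∫ s : ℝ, ((x-s)^2+y^2)⁻¹ ∂μ)
          / Complex.normSq (∫ s : ℝ, (((x:ℂ) + y*Complex.I) - (s:ℂ))⁻¹ ∂μ) - 1 := by
  set z : ℂ := (x:ℂ) + y*Complex.I with hzdef
  have hz : 0 < z.im := by simp [hzdef, hy]
  set G : ℂ := ∫ s : ℝ, (z - (s:ℂ))⁻¹ ∂μ with hGdef
  set A : ℝ := ∫ s : ℝ, (1+s^2)/((s-x)^2+y^2) ∂ρ with hAdef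
  set B : ℝ := ∫ s : ℝ, ((x-s)^2+y^2)⁻¹ ∂μ with hBdef
  have hAnn : 0 ≤ A := by
    apply integral_nonneg
    intro s; positivity
  have him : (G⁻¹).im = y + y * A := by
    rw [hGdef, hNev z hz]
    simp only [Complex.add_im, Complex.ofReal_im]
    rw [lem_imF ρ x y hy]
    simp [hzdef]
    exact Or.inl rfl
  have hGne : G ≠ 0 := by
    intro h0
    rw [h0] at him
    simp at him
    nlinarith
  have him2 : (G⁻¹).im = y * B / Complex.normSq G := by
    rw [Complex.inv_im, hGdef, lem_imG μ x y hy]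
    rw [neg_neg, ← hBdef]
  have hns : Complex.normSq G ≠ 0 := by
    simpa [Complex.normSq_eq_zero] using hGne
  have : y + y * A = y * B / Complex.normSq G := by rw [← him, ← him2]
  field_simp at this ⊢
  nlinarith [this]
-- pointwise monotonicity in n
theorem lem_mono (x s : ℝ) :
    Monotone (fun n : ℕ => ENNReal.ofReal ((1+s^2)/((s-x)^2+(((n:ℝ)+1)⁻¹)^2))) := by
  intro n m hnm
  apply ENNReal.ofReal_le_ofReal
  have h1 : ((n:ℝ)+1) ≤ ((m:ℝ)+1) := by exact_mod_cast Nat.succ_le_succ hnm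
  have h2 : ((m:ℝ)+1)⁻¹ ≤ ((n:ℝ)+1)⁻¹ := by
    apply inv_anti₀ (by positivity) h1
  have h3 : (((m:ℝ)+1)⁻¹)^2 ≤ (((n:ℝ)+1)⁻¹)^2 := by
    apply pow_le_pow_left₀ (by positivity) h2
  apply div_le_div_of_nonneg_left (by positivity) (by positivity)
  linarith

theorem lem_Y0 : Filter.Tendsto (fun n : ℕ => ((n:ℝ)+1)⁻¹) Filter.atTop (nhds 0) := by
  simpa [one_div] using tendsto_one_div_add_atTop_nhds_zero_nat (𝕜 := ℝ)

theorem stmt_15 (μ : Measure ℝ) [IsProbabilityMeasure μ]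
    (ρ : Measure ℝ) [IsFiniteMeasure ρ] (a : ℝ)
    (hNev : ∀ z : ℂ, 0 < z.im →
      (∫ s : ℝ, (z - (s : ℂ))⁻¹ ∂μ)⁻¹
        = (a : ℂ) + z + ∫ s : ℝ, (1 + (s : ℂ) * z) / ((s : ℂ) - z) ∂ρ)
    (c d : ℝ) (hcd : c < d) (hμI : μ (Ioo c d) = 0)
    (hnz : ∀ x ∈ Ioo c d, (∫ s : ℝ, (x - s)⁻¹ ∂μ) ≠ 0) :
    ∀ x ∈ Ioo c d,
      (∫⁻ s : ℝ, ENNReal.ofReal ((s ^ 2 + 1) / (s - x) ^ 2) ∂ρ)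
        = ENNReal.ofReal
            ((∫ s : ℝ, ((x - s) ^ 2)⁻¹ ∂μ) / (∫ s : ℝ, (x - s)⁻¹ ∂μ) ^ 2 - 1) := by
  intro x hx
  obtain ⟨hxc, hxd⟩ := hx
  set Y : ℕ → ℝ := fun n => ((n:ℝ)+1)⁻¹ with hYdef
  have hY : ∀ n, 0 < Y n := fun n => by positivity
  have hY2 : Filter.Tendsto (fun n => (Y n)^2) Filter.atTop (nhds 0) := by
    simpa [hYdef, inv_pow] using lem_Y0.pow 2
  set δ : ℝ := min (x - c) (d - x) with hδdef
  have hδ : 0 < δ := lt_min (by linarith) (by linarith)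
  have hae : ∀ᵐ s ∂μ, δ^2 ≤ (x - s)^2 := by
    have h0 : ∀ᵐ s ∂μ, s ∉ Ioo c d := by
      rw [ae_iff]
      simp only [not_not, Set.setOf_mem_eq]; exact hμI
    filter_upwards [h0] with s hs
    rw [Set.mem_Ioo, not_and_or] at hs
    have hδ1 : δ ≤ x - c := min_le_left _ _
    have hδ2 : δ ≤ d - x := min_le_right _ _
    rcases hs with h | h
    · push_neg at h
      nlinarith
    · push_neg at h
      nlinarith
  set r : ℝ := ∫ s : ℝ, (x - s)⁻¹ ∂μ with hrdef
  have hr : r ≠ 0 := hnz x ⟨hxc, hxd⟩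
  -- convergence of B
  have hBt : Filter.Tendsto (fun n => ∫ s : ℝ, ((x-s)^2+(Y n)^2)⁻¹ ∂μ) Filter.atTop
      (nhds (∫ s : ℝ, ((x - s)^2)⁻¹ ∂μ)) := by
    apply tendsto_integral_of_dominated_convergence (fun _ => (δ^2)⁻¹)
    · intro n
      apply Continuous.aestronglyMeasurable
      apply Continuous.inv₀ (by fun_prop)
      intro s
      have := hY n
      positivity
    · exact integrable_const _
    · intro n
      filter_upwards [hae] with s hs
      rw [Real.norm_of_nonneg (by positivity)]
      apply inv_anti₀ (by positivity)
      nlinarith [sq_nonneg (Y n)]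
    · filter_upwards [hae] with s hs
      have hne : (x-s)^2 ≠ 0 := by nlinarith
      have h1 : Filter.Tendsto (fun n => (x-s)^2 + (Y n)^2) Filter.atTop (nhds ((x-s)^2 + 0)) := by
        exact Filter.Tendsto.add tendsto_const_nhds hY2
      rw [add_zero] at h1
      exact h1.inv₀ hne
  -- convergence of G
  have hGt : Filter.Tendsto (fun n => ∫ s : ℝ, (((x:ℂ) + (Y n)*Complex.I) - (s:ℂ))⁻¹ ∂μ)
      Filter.atTop (nhds ((r:ℂ))) := by
    have hcoer : (∫ s : ℝ, ((x:ℂ) - (s:ℂ))⁻¹ ∂μ) = (r:ℂ) := by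
      rw [hrdef]
      have h := integral_ofReal (𝕜 := ℂ) (μ := μ) (f := fun s => (x - s)⁻¹)
      have h2 : (RCLike.ofReal (K := ℂ) (∫ s : ℝ, (x - s)⁻¹ ∂μ))
          = ((∫ s : ℝ, (x - s)⁻¹ ∂μ : ℝ) : ℂ) := rfl
      rw [← h2, ← h]
      apply integral_congr_ae
      apply Filter.Eventually.of_forall
      intro s
      push_cast
      rfl
    rw [← hcoer]
    apply tendsto_integral_of_dominated_convergence (fun _ => δ⁻¹)
    · intro n
      exact (lem_Gcont (z := (x:ℂ) + (Y n)*Complex.I) (by simpa using hY n)).aestronglyMeasurable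
    · exact integrable_const _
    · intro n
      filter_upwards [hae] with s hs
      have habs : δ ≤ |x - s| := by
        nlinarith [abs_nonneg (x-s), _root_.sq_abs (x-s)]
      rw [norm_inv]
      apply inv_anti₀ hδ
      calc δ ≤ |x - s| := habs
      _ = |(((x:ℂ) + (Y n)*Complex.I) - (s:ℂ)).re| := by
            simp
      _ ≤ ‖((x:ℂ) + (Y n)*Complex.I) - (s:ℂ)‖ := Complex.abs_re_le_norm _
    · filter_upwards [hae] with s hs
      have hxs : x - s ≠ 0 := by
        intro h; rw [h] at hs; simp at hs; nlinarith
      have hne : (x:ℂ) - (s:ℂ) ≠ 0 := by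
        intro h
        apply hxs
        have : ((x - s : ℝ) : ℂ) = 0 := by push_cast; rw [← h]
        exact_mod_cast this
      have h1 : Filter.Tendsto (fun n => ((x:ℂ) + (Y n)*Complex.I) - (s:ℂ)) Filter.atTop
          (nhds ((x:ℂ) + (0:ℝ)*Complex.I - (s:ℂ))) := by
        apply Filter.Tendsto.sub _ tendsto_const_nhds
        apply Filter.Tendsto.add tendsto_const_nhds
        apply Filter.Tendsto.mul_const
        exact (Complex.continuous_ofReal.tendsto 0).comp lem_Y0
      have h2 : (x:ℂ) + (0:ℝ)*Complex.I - (s:ℂ) = (x:ℂ) - (s:ℂ) := by push_cast; ring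
      rw [h2] at h1
      exact h1.inv₀ hne
  -- convergence of normSq G
  have hnsq : Filter.Tendsto
      (fun n => Complex.normSq (∫ s : ℝ, (((x:ℂ) + (Y n)*Complex.I) - (s:ℂ))⁻¹ ∂μ))
      Filter.atTop (nhds (r^2)) := by
    have := (Complex.continuous_normSq.tendsto ((r:ℂ))).comp hGt
    simpa [Complex.normSq_ofReal, sq, Function.comp_def] using this
  -- convergence of A
  set R : ℝ := (∫ s : ℝ, ((x - s)^2)⁻¹ ∂μ) / r^2 - 1 with hRdef
  have hRt : Filter.Tendsto (fun n => ∫ s : ℝ, (1+s^2)/((s-x)^2+(Y n)^2) ∂ρ) Filter.atTop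
      (nhds R) := by
    have h1 : Filter.Tendsto
        (fun n => (∫ s : ℝ, ((x-s)^2+(Y n)^2)⁻¹ ∂μ)
          / Complex.normSq (∫ s : ℝ, (((x:ℂ) + (Y n)*Complex.I) - (s:ℂ))⁻¹ ∂μ) - 1)
        Filter.atTop (nhds R) := by
      rw [hRdef]
      exact Filter.Tendsto.sub (hBt.div hnsq (pow_ne_zero 2 hr)) tendsto_const_nhds
    apply Filter.Tendsto.congr _ h1
    intro n
    exact (lem_A_eq μ ρ a hNev x (Y n) (hY n)).symm
  -- the lintegrals
  set L : ℕ → ENNReal := fun n => ∫⁻ s : ℝ, ENNReal.ofReal ((1+s^2)/((s-x)^2+(Y n)^2)) ∂ρ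
    with hLdef
  have hLo : ∀ n, L n = ENNReal.ofReal (∫ s : ℝ, (1+s^2)/((s-x)^2+(Y n)^2) ∂ρ) := by
    intro n
    rw [ofReal_integral_eq_lintegral_ofReal (lem_gint ρ x (Y n) (hY n))]
    apply Filter.Eventually.of_forall
    intro s
    have := hY n
    positivity
  have hLt : Filter.Tendsto L Filter.atTop (nhds (ENNReal.ofReal R)) := by
    have := (ENNReal.continuous_ofReal.tendsto R).comp hRt
    apply Filter.Tendsto.congr _ this
    intro n
    exact (hLo n).symm
  have hLm : Monotone L := by
    intro n m hnm
    exact lintegral_mono fun s => lem_mono x s hnm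
  have hsup : ⨆ n, L n = ENNReal.ofReal R :=
    tendsto_nhds_unique (tendsto_atTop_iSup hLm) hLt
  -- no atom at x
  have hρx : ρ {x} = 0 := by
    by_contra hne0
    have ht : 0 < (ρ {x}).toReal :=
      ENNReal.toReal_pos hne0 (measure_ne_top ρ _)
    obtain ⟨N, hN⟩ := exists_nat_gt ((max R 0) / (ρ {x}).toReal)
    have key : ENNReal.ofReal (((N:ℝ)+1)) * ρ {x} ≤ L N := by
      calc ENNReal.ofReal (((N:ℝ)+1)) * ρ {x}
          ≤ ENNReal.ofReal ((1+x^2)/((x-x)^2+(Y N)^2)) * ρ {x} := by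
            apply mul_le_mul_left
            apply ENNReal.ofReal_le_ofReal
            have hYN : Y N = ((N:ℝ)+1)⁻¹ := rfl
            have heq : (1+x^2)/((x-x)^2+(Y N)^2) = (1+x^2) * ((N:ℝ)+1)^2 := by
              rw [hYN, show ((x:ℝ)-x)^2 = 0 by ring, zero_add, inv_pow]
              field_simp
            rw [heq]
            nlinarith [Nat.cast_nonneg (α := ℝ) N, sq_nonneg x]
      _ = ∫⁻ s : ℝ in {x}, ENNReal.ofReal ((1+s^2)/((s-x)^2+(Y N)^2)) ∂ρ := by
            rw [lintegral_singleton]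
      _ ≤ L N := setLIntegral_le_lintegral _ _
    have hle : ENNReal.ofReal (((N:ℝ)+1)) * ρ {x} ≤ ENNReal.ofReal R := by
      rw [← hsup]
      exact key.trans (le_iSup L N)
    have hρre : ρ {x} = ENNReal.ofReal ((ρ {x}).toReal) :=
      (ENNReal.ofReal_toReal (measure_ne_top ρ _)).symm
    rw [hρre, ← ENNReal.ofReal_mul (by positivity)] at hle
    have hle2 : ((N:ℝ)+1) * (ρ {x}).toReal ≤ max R 0 := by
      have := hle.trans (ENNReal.ofReal_le_ofReal (le_max_left R 0))
      exact (ENNReal.ofReal_le_ofReal_iff (le_max_right R 0)).mp this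
    rw [div_lt_iff₀ ht] at hN
    nlinarith [Nat.cast_nonneg (α := ℝ) N]
  -- conclusion
  have haes : ∀ᵐ s ∂ρ, s ≠ x := by
    rw [ae_iff]
    simpa using hρx
  calc (∫⁻ s : ℝ, ENNReal.ofReal ((s ^ 2 + 1) / (s - x) ^ 2) ∂ρ)
      = ∫⁻ s : ℝ, ⨆ n, ENNReal.ofReal ((1+s^2)/((s-x)^2+(Y n)^2)) ∂ρ := by
        apply lintegral_congr_ae
        filter_upwards [haes] with s hs
        have hne : ((s:ℝ)-x)^2 ≠ 0 := pow_ne_zero 2 (sub_ne_zero.mpr hs)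
        have hmono : Monotone (fun n => ENNReal.ofReal ((1+s^2)/((s-x)^2+(Y n)^2))) :=
          fun n m h => lem_mono x s h
        have htend : Filter.Tendsto (fun n => ENNReal.ofReal ((1+s^2)/((s-x)^2+(Y n)^2)))
            Filter.atTop (nhds (ENNReal.ofReal ((s^2+1)/(s-x)^2))) := by
          apply (ENNReal.continuous_ofReal.tendsto _).comp
          have h1 : Filter.Tendsto (fun n => (s-x)^2 + (Y n)^2) Filter.atTop
              (nhds ((s-x)^2 + 0)) := by
            exact Filter.Tendsto.add tendsto_const_nhds hY2
          rw [add_zero] at h1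
          have h2 := (tendsto_const_nhds (x := (1+s^2)) (f := Filter.atTop (α := ℕ))).div h1
            (by rw [show ((s:ℝ)-x)^2 = (s-x)^2 from rfl]; intro h; exact hne h)
          rw [show (1+s^2)/(s-x)^2 = (s^2+1)/(s-x)^2 by ring_nf] at h2
          exact h2
        exact (tendsto_nhds_unique (tendsto_atTop_iSup hmono) htend).symm
    _ = ⨆ n, L n := by
        apply lintegral_iSup'
        · intro n
          apply Measurable.aemeasurable
          apply Measurable.ennreal_ofReal
          apply Continuous.measurable
          apply Continuous.div (by fun_prop) (by fun_prop)
          intro s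
          have := hY n
          positivity
        · exact Filter.Eventually.of_forall fun s n m h => lem_mono x s h
    _ = ENNReal.ofReal R := hsup
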